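/- For each n ∈ ℕ and θ ∈ Θ let X_n^θ : [0,1] × Ω → ℝ be such that X_n^θ(t, ·) is measurable for each t ∈ [0,1] and every sample path t ↦ X_n^θ(t, ω) is nondecreasing. Let (f^θ)_{θ∈Θ} be a family of nondecreasing continuous functions [0,1] → ℝ that is uniformly equicontinuous: for every ε > 0 there exists δ > 0 such that |f^θ(s) − f^θ(t)| < ε for all θ ∈ Θ and all s, t ∈ [0,1] with |s − t| ≤ δ. If for every t ∈ [0,1] and every ε > 0, sup_{θ∈Θ} ℙ( |X_n^θ(t) − f^θ(t)| > ε ) → 0 as n → ∞, then for every ε > 0, sup_{θ∈Θ} ℙ( sup_{t∈[0,1]} |X_n^θ(t) − f^θ(t)| > ε ) → 0 as n → ∞. -/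

import Mathlib

open MeasureTheory Filter Topology

/-- **Uniform convergence of monotone processes towards equicontinuous monotone limits.**
If, for each `t ∈ [0,1]`, `X_n^θ(t) → f^θ(t)` uniformly in probability over `Θ`, the sample
paths of `X_n^θ` are nondecreasing, and `(f^θ)` is a uniformly equicontinuous family of
nondecreasing continuous functions, then the convergence holds uniformly in `t ∈ [0,1]`,
uniformly in probability over `Θ`. -/
theorem uniform_monotone_convergence
    {Ω Θ : Type*} [MeasurableSpace Ω] (P : Measure Ω) [IsProbabilityMeasure P] [Nonempty Θ]
    (X : ℕ → Θ → Set.Icc (0 : ℝ) 1 → Ω → ℝ)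
    (f : Θ → Set.Icc (0 : ℝ) 1 → ℝ)
    (hXmeas : ∀ n θ t, Measurable (X n θ t))
    (hXmono : ∀ n θ ω, Monotone fun t => X n θ t ω)
    (hfmono : ∀ θ, Monotone (f θ))
    (hfcont : ∀ θ, Continuous (f θ))
    (hequi : ∀ ε > (0 : ℝ), ∃ δ > (0 : ℝ), ∀ θ, ∀ s t : Set.Icc (0 : ℝ) 1,
      dist s t ≤ δ → |f θ s - f θ t| < ε)
    (hpt : ∀ t, ∀ ε > (0 : ℝ),
      Tendsto (fun n => ⨆ θ, P {ω | ε < |X n θ t ω - f θ t|}) atTop (𝓝 0)) :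
    ∀ ε > (0 : ℝ),
      Tendsto (fun n => ⨆ θ, P {ω | ε < ⨆ t, |X n θ t ω - f θ t|}) atTop (𝓝 0) := by
  intro ε hε
  obtain ⟨δ, hδ, hδε⟩ := hequi (ε / 2) (by linarith)
  set k : ℕ := max ⌈1 / δ⌉₊ 1 with hkdef
  have hk1 : 1 ≤ k := le_max_right _ _
  have hkpos : (0 : ℝ) < (k : ℝ) := by exact_mod_cast hk1
  have hkδ : 1 / (k : ℝ) ≤ δ := by
    rw [div_le_iff₀ hkpos]
    have h1 : 1 / δ ≤ (⌈1 / δ⌉₊ : ℝ) := Nat.le_ceil _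
    have h2 : (⌈1 / δ⌉₊ : ℝ) ≤ (k : ℝ) := by exact_mod_cast le_max_left _ 1
    rw [div_le_iff₀ hδ] at h1
    nlinarith
  have hgmem : ∀ i : Fin (k + 1), ((i : ℕ) : ℝ) / k ∈ Set.Icc (0 : ℝ) 1 := by
    intro i
    constructor
    · positivity
    · rw [div_le_one hkpos]
      exact_mod_cast Fin.is_le i
  set g : Fin (k + 1) → Set.Icc (0 : ℝ) 1 := fun i => ⟨((i : ℕ) : ℝ) / k, hgmem i⟩ with hgdef
  haveI : Nonempty (Set.Icc (0 : ℝ) 1) := ⟨⟨0, by norm_num⟩⟩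
  have hsub : ∀ n θ, {ω | ε < ⨆ t, |X n θ t ω - f θ t|} ⊆
      ⋃ i : Fin (k + 1), {ω | ε / 2 < |X n θ (g i) ω - f θ (g i)|} := by
    intro n θ ω hω
    simp only [Set.mem_setOf_eq] at hω
    by_contra hc
    simp only [Set.mem_iUnion, Set.mem_setOf_eq, not_exists, not_lt] at hc
    have hsup : (⨆ t, |X n θ t ω - f θ t|) ≤ ε := by
      apply ciSup_le
      intro t
      set j : ℕ := min ⌊(t : ℝ) * k⌋₊ (k - 1) with hjdef
      have hj : j + 1 ≤ k := by
        have : j ≤ k - 1 := min_le_right _ _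
        omega
      set i1 : Fin (k + 1) := ⟨j, by omega⟩ with hi1
      set i2 : Fin (k + 1) := ⟨j + 1, by omega⟩ with hi2
      have htk0 : (0 : ℝ) ≤ (t : ℝ) * k := by
        have := t.2.1
        positivity
      have ha : ((j : ℕ) : ℝ) / k ≤ (t : ℝ) := by
        rw [div_le_iff₀ hkpos]
        have h1 : (j : ℝ) ≤ (⌊(t : ℝ) * k⌋₊ : ℝ) := by
          exact_mod_cast min_le_left _ (k - 1)
        have h2 : ((⌊(t : ℝ) * k⌋₊ : ℕ) : ℝ) ≤ (t : ℝ) * k := Nat.floor_le htk0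
        linarith
      have hb : (t : ℝ) ≤ ((j : ℕ) + 1 : ℝ) / k := by
        rw [le_div_iff₀ hkpos]
        have hfl : (t : ℝ) * k < (⌊(t : ℝ) * k⌋₊ : ℝ) + 1 := Nat.lt_floor_add_one _
        have ht1 : (t : ℝ) ≤ 1 := t.2.2
        have htk : (t : ℝ) * k ≤ (k : ℝ) := by nlinarith
        rcases le_or_gt (⌊(t : ℝ) * k⌋₊) (k - 1) with h | h
        · have : j = ⌊(t : ℝ) * k⌋₊ := min_eq_left h
          rw [this]
          linarith
        · have : j = k - 1 := min_eq_right (by omega)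
          have hjk : ((j : ℕ) : ℝ) + 1 = (k : ℝ) := by
            rw [this]
            have : (k - 1 : ℕ) + 1 = k := by omega
            exact_mod_cast congrArg (Nat.cast : ℕ → ℝ) this
          linarith
      have hle1 : g i1 ≤ t := by
        rw [← Subtype.coe_le_coe]
        exact ha
      have hle2 : t ≤ g i2 := by
        rw [← Subtype.coe_le_coe]
        exact_mod_cast hb
      have hdist : dist (g i2) (g i1) ≤ δ := by
        rw [Subtype.dist_eq, Real.dist_eq]
        have : ((g i2 : Set.Icc (0:ℝ) 1) : ℝ) - ((g i1 : Set.Icc (0:ℝ) 1) : ℝ) = 1 / k := by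
          simp only [hgdef, hi1, hi2]
          push_cast
          field_simp
          ring
        rw [this, abs_of_pos (by positivity)]
        exact hkδ
      have hequi12 : |f θ (g i2) - f θ (g i1)| < ε / 2 := hδε θ (g i2) (g i1) hdist
      have hm1 : X n θ (g i1) ω ≤ X n θ t ω := hXmono n θ ω hle1
      have hm2 : X n θ t ω ≤ X n θ (g i2) ω := hXmono n θ ω hle2
      have hf1 : f θ (g i1) ≤ f θ t := hfmono θ hle1
      have hf2 : f θ t ≤ f θ (g i2) := hfmono θ hle2
      have hc1 := abs_le.mp (hc i1)
      have hc2 := abs_le.mp (hc i2)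
      have he := abs_lt.mp hequi12
      rw [abs_le]
      constructor <;> [linarith [hc1.1, he.2]; linarith [hc2.2, he.2]]
    linarith
  have hbound : ∀ n, (⨆ θ, P {ω | ε < ⨆ t, |X n θ t ω - f θ t|}) ≤
      ∑ i : Fin (k + 1), ⨆ θ, P {ω | ε / 2 < |X n θ (g i) ω - f θ (g i)|} := by
    intro n
    refine iSup_le fun θ => ?_
    calc P {ω | ε < ⨆ t, |X n θ t ω - f θ t|}
        ≤ P (⋃ i : Fin (k + 1), {ω | ε / 2 < |X n θ (g i) ω - f θ (g i)|}) :=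
          measure_mono (hsub n θ)
      _ ≤ ∑ i : Fin (k + 1), P {ω | ε / 2 < |X n θ (g i) ω - f θ (g i)|} :=
          measure_iUnion_fintype_le _ _
      _ ≤ ∑ i : Fin (k + 1), ⨆ θ, P {ω | ε / 2 < |X n θ (g i) ω - f θ (g i)|} :=
          Finset.sum_le_sum fun i _ =>
            le_iSup (fun θ => P {ω | ε / 2 < |X n θ (g i) ω - f θ (g i)|}) θ
  have hsum : Tendsto
      (fun n => ∑ i : Fin (k + 1), ⨆ θ, P {ω | ε / 2 < |X n θ (g i) ω - f θ (g i)|})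
      atTop (𝓝 0) := by
    have := tendsto_finset_sum (Finset.univ : Finset (Fin (k + 1)))
      (fun i _ => hpt (g i) (ε / 2) (by linarith))
    simpa using this
  exact tendsto_of_tendsto_of_tendsto_of_le_of_le tendsto_const_nhds hsum
    (fun n => zero_le) hbound
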